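/- For every complex number z with 0 < Re z < 1 and all real a, a' with 0 < a < 1 and 0 < a' < 1, the line integral ∫_{t ∈ ℝ} f_r(a + t·exp(-3iπ/4))·exp(-3iπ/4) dt equals ∫_{t ∈ ℝ} f_r(a' + t·exp(-3iπ/4))·exp(-3iπ/4) dt; that is, the integral of f_r along the line of slope +1 through (a,0) is independent of the choice of a in (0,1). -/

import Mathlib

open MeasureTheory

/-- The right integrand `f_r(w) = w^(z-1)·exp(πi w²)/(exp(πi w) - exp(-πi w))`. -/
noncomputable def fr (z w : ℂ) : ℂ :=
  w ^ (z - 1) * Complex.exp (Real.pi * Complex.I * w ^ 2) /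
    (Complex.exp (Real.pi * Complex.I * w) - Complex.exp (-(Real.pi * Complex.I) * w))

noncomputable def dd : ℂ := Complex.exp (-(3 * Real.pi * Complex.I) / 4)

lemma dd_eq : dd = (Real.sqrt 2 / 2 : ℝ) * (-1 - Complex.I) := by
  have h : (-(3 * (Real.pi:ℂ) * Complex.I) / 4) = ((-(3 * Real.pi / 4) : ℝ) : ℂ) * Complex.I := by
    push_cast; ring
  rw [dd, h, Complex.exp_mul_I, ← Complex.ofReal_cos, ← Complex.ofReal_sin]
  have h34 : (3 * Real.pi / 4) = Real.pi - Real.pi / 4 := by ring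
  rw [Real.cos_neg, Real.sin_neg, h34, Real.cos_pi_sub, Real.sin_pi_sub,
    Real.cos_pi_div_four, Real.sin_pi_div_four]
  push_cast; ring

lemma dd_sq : dd ^ 2 = Complex.I := by
  rw [dd_eq]
  have h2 : ((Real.sqrt 2 : ℝ) : ℂ) ^ 2 = 2 := by
    norm_cast
    rw [sq, Real.mul_self_sqrt (by norm_num)]
  have : ((Real.sqrt 2 / 2 : ℝ) : ℂ) ^ 2 = 1/2 := by
    push_cast [div_pow, h2]
    norm_num
  rw [mul_pow, this]
  have : (-1 - Complex.I) ^ 2 = 2 * Complex.I := by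
    ring_nf
    rw [Complex.I_sq]
    ring
  rw [this]; ring

lemma dd_ne : dd ≠ 0 := Complex.exp_ne_zero _

lemma abs_dd : ‖dd‖ = 1 := by
  rw [dd, Complex.norm_exp]
  have : (-(3 * (Real.pi:ℂ) * Complex.I) / 4).re = 0 := by simp
  rw [this, Real.exp_zero]

lemma re_dd_mul (u : ℂ) : (dd * u).re = Real.sqrt 2 / 2 * (u.im - u.re) := by
  rw [dd_eq]
  simp [Complex.mul_re, Complex.mul_im]
  ring

lemma im_dd_mul (u : ℂ) : (dd * u).im = -(Real.sqrt 2 / 2) * (u.re + u.im) := by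
  rw [dd_eq]
  simp [Complex.mul_re, Complex.mul_im]
  ring

noncomputable def gg (z v : ℂ) : ℂ := fr z (dd * v) * dd

lemma sqrt2_pos : 0 < Real.sqrt 2 := Real.sqrt_pos.mpr (by norm_num)

lemma re_of_im_eq_zero {u : ℂ} (hy0 : 0 < u.im) (him : (dd * u).im = 0) :
    (dd * u).re = Real.sqrt 2 * u.im := by
  rw [im_dd_mul] at him
  have hre : u.re = -u.im := by
    have h2 : u.re + u.im = 0 := by
      rcases mul_eq_zero.mp him with h | h
      · exfalso; have := sqrt2_pos; simp at h; try linarith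
      · exact h
    linarith
  rw [re_dd_mul, hre]; ring

lemma slit {u : ℂ} (hy0 : 0 < u.im) : dd * u ∈ Complex.slitPlane := by
  rw [Complex.mem_slitPlane_iff]
  by_cases him : (dd * u).im = 0
  · left
    rw [re_of_im_eq_zero hy0 him]
    positivity
  · right; exact him

lemma ddu_ne {u : ℂ} (hy0 : 0 < u.im) : dd * u ≠ 0 := by
  intro h
  rcases mul_eq_zero.mp h with h | h
  · exact dd_ne h
  · rw [h] at hy0; simp at hy0

lemma denom_ne {u : ℂ} (hy0 : 0 < u.im) (hy1 : Real.sqrt 2 * u.im < 1) :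
    Complex.exp (Real.pi * Complex.I * (dd * u)) -
      Complex.exp (-(Real.pi * Complex.I) * (dd * u)) ≠ 0 := by
  intro h
  rw [sub_eq_zero] at h
  have h2 : Complex.exp (Real.pi * Complex.I * (dd * u) - -(Real.pi * Complex.I) * (dd * u)) = 1 := by
    rw [Complex.exp_sub, h, div_self (Complex.exp_ne_zero _)]
  rw [Complex.exp_eq_one_iff] at h2
  obtain ⟨n, hn⟩ := h2
  have hw : dd * u = (n : ℂ) := by
    have hπ : (2 * (Real.pi : ℂ) * Complex.I) ≠ 0 := by
      simp [Real.pi_ne_zero, Complex.I_ne_zero]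
    refine mul_left_cancel₀ hπ ?_
    linear_combination hn
  have him : (dd * u).im = 0 := by rw [hw]; simp
  have hre : (dd * u).re = (n : ℝ) := by rw [hw]; simp
  rw [re_of_im_eq_zero hy0 him] at hre
  have h0 : (0 : ℝ) < (n : ℝ) := by rw [← hre]; positivity
  have h1 : (n : ℝ) < 1 := by rw [← hre]; exact hy1
  have : (0 : ℤ) < n := by exact_mod_cast h0
  have : (n : ℤ) < 1 := by exact_mod_cast h1
  omega

lemma diff_g (z : ℂ) {u : ℂ} (hy0 : 0 < u.im) (hy1 : Real.sqrt 2 * u.im < 1) :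
    DifferentiableAt ℂ (fun v => fr z (dd * v) * dd) u := by
  have h1 : DifferentiableAt ℂ (fun v : ℂ => dd * v) u :=
    (differentiableAt_id.const_mul dd)
  have hcpow : DifferentiableAt ℂ (fun v : ℂ => (dd * v) ^ (z - 1)) u :=
    h1.cpow (differentiableAt_const _) (slit hy0)
  have hexp : DifferentiableAt ℂ
      (fun v : ℂ => Complex.exp (Real.pi * Complex.I * (dd * v) ^ 2)) u :=
    ((h1.pow 2).const_mul _).cexp
  have hd1 : DifferentiableAt ℂ
      (fun v : ℂ => Complex.exp (Real.pi * Complex.I * (dd * v))) u :=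
    (h1.const_mul _).cexp
  have hd2 : DifferentiableAt ℂ
      (fun v : ℂ => Complex.exp (-(Real.pi * Complex.I) * (dd * v))) u :=
    (h1.const_mul _).cexp
  exact (((hcpow.mul hexp).div (hd1.sub hd2) (denom_ne hy0 hy1)).mul_const dd)

lemma num_bound (z : ℂ) (hz : z.re < 1) {b₁ b₂ : ℝ} (hb₁ : 0 < b₁) {u : ℂ}
    (h1 : b₁ ≤ u.im) (h2 : u.im ≤ b₂) :
    ‖(dd * u) ^ (z - 1) * Complex.exp (Real.pi * Complex.I * (dd * u) ^ 2)‖ ≤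
      b₁ ^ (z.re - 1) * Real.exp (Real.pi * |z.im|) * Real.exp (Real.pi * b₂ ^ 2) *
        Real.exp (-Real.pi * u.re ^ 2) := by
  have hy0 : 0 < u.im := lt_of_lt_of_le hb₁ h1
  have habs : b₁ ≤ ‖dd * u‖ := by
    calc b₁ ≤ u.im := h1
    _ ≤ |u.im| := le_abs_self _
    _ ≤ ‖u‖ := Complex.abs_im_le_norm u
    _ = ‖dd * u‖ := by rw [norm_mul, abs_dd, one_mul]
  -- cpow bound
  have hcpow : ‖(dd * u) ^ (z - 1)‖ ≤
      b₁ ^ (z.re - 1) * Real.exp (Real.pi * |z.im|) := by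
    rw [Complex.norm_cpow_of_ne_zero (ddu_ne hy0)]
    have hre : (z - 1).re = z.re - 1 := by simp
    have him : (z - 1).im = z.im := by simp
    rw [hre, him, div_eq_mul_inv, ← Real.exp_neg]
    have hA : ‖dd * u‖ ^ (z.re - 1) ≤ b₁ ^ (z.re - 1) :=
      Real.rpow_le_rpow_of_nonpos hb₁ habs (by linarith)
    have hB : Real.exp (-((dd * u).arg * z.im)) ≤ Real.exp (Real.pi * |z.im|) := by
      apply Real.exp_le_exp.mpr
      calc -((dd * u).arg * z.im) ≤ |(dd * u).arg * z.im| := neg_le_abs _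
      _ = |(dd * u).arg| * |z.im| := abs_mul _ _
      _ ≤ Real.pi * |z.im| := by
          apply mul_le_mul_of_nonneg_right (Complex.abs_arg_le_pi _) (abs_nonneg _)
    exact mul_le_mul hA hB (Real.exp_nonneg _) (Real.rpow_nonneg hb₁.le _)
  -- exp bound
  have hexpval : Real.pi * Complex.I * (dd * u) ^ 2 = -(Real.pi : ℂ) * u ^ 2 := by
    rw [mul_pow, dd_sq]
    rw [show ((Real.pi : ℂ) * Complex.I * (Complex.I * u ^ 2)) =
      (Real.pi : ℂ) * (Complex.I * Complex.I) * u ^ 2 by ring, Complex.I_mul_I]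
    ring
  have hre2 : (-(Real.pi : ℂ) * u ^ 2).re = -Real.pi * (u.re ^ 2 - u.im ^ 2) := by
    rw [pow_two]
    simp only [Complex.mul_re, Complex.mul_im, Complex.neg_re, Complex.neg_im,
      Complex.ofReal_re, Complex.ofReal_im]
    ring
  have hexp : ‖Complex.exp (Real.pi * Complex.I * (dd * u) ^ 2)‖ ≤
      Real.exp (Real.pi * b₂ ^ 2) * Real.exp (-Real.pi * u.re ^ 2) := by
    rw [hexpval, Complex.norm_exp, hre2, ← Real.exp_add]
    apply Real.exp_le_exp.mpr
    have : u.im ^ 2 ≤ b₂ ^ 2 := by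
      apply sq_le_sq' <;> nlinarith
    nlinarith [Real.pi_pos]
  calc ‖(dd * u) ^ (z - 1) * Complex.exp (Real.pi * Complex.I * (dd * u) ^ 2)‖
      = ‖(dd * u) ^ (z - 1)‖ *
        ‖Complex.exp (Real.pi * Complex.I * (dd * u) ^ 2)‖ := norm_mul _ _
    _ ≤ (b₁ ^ (z.re - 1) * Real.exp (Real.pi * |z.im|)) *
        (Real.exp (Real.pi * b₂ ^ 2) * Real.exp (-Real.pi * u.re ^ 2)) := by
        apply mul_le_mul hcpow hexp (norm_nonneg _) (by positivity)
    _ = _ := by ring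

noncomputable def Dfun (u : ℂ) : ℝ :=
  ‖Complex.exp (Real.pi * Complex.I * (dd * u)) -
    Complex.exp (-(Real.pi * Complex.I) * (dd * u))‖

lemma sqrt2_ge_one : (1 : ℝ) ≤ Real.sqrt 2 := by
  rw [show (1:ℝ) = Real.sqrt 1 by rw [Real.sqrt_one]]
  exact Real.sqrt_le_sqrt (by norm_num)

lemma abs_exp_pi_I_mul (w : ℂ) :
    ‖Complex.exp (Real.pi * Complex.I * w)‖ = Real.exp (-(Real.pi * w.im)) := by
  rw [Complex.norm_exp]
  congr 1
  simp [Complex.mul_re, Complex.mul_im]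

lemma abs_exp_neg_pi_I_mul (w : ℂ) :
    ‖Complex.exp (-(Real.pi * Complex.I) * w)‖ = Real.exp (Real.pi * w.im) := by
  rw [Complex.norm_exp]
  congr 1
  simp [Complex.mul_re, Complex.mul_im]

lemma denom_tail {b₂ : ℝ} {u : ℂ} (hy0 : 0 < u.im) (h2 : u.im ≤ b₂)
    (hx : b₂ + 1 ≤ |u.re|) : 1 ≤ Dfun u := by
  set m := (dd * u).im with hm_def
  have hxy : 1 ≤ |u.re + u.im| := by
    have h3 : |u.re| - |u.im| ≤ |u.re + u.im| := by
      calc |u.re| - |u.im| = |u.re| - |-u.im| := by rw [abs_neg]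
      _ ≤ |u.re - -u.im| := abs_sub_abs_le_abs_sub _ _
      _ = |u.re + u.im| := by rw [sub_neg_eq_add]
    have h4 : |u.im| = u.im := abs_of_nonneg hy0.le
    linarith
  have hm : 1 / 2 ≤ |m| := by
    rw [hm_def, im_dd_mul, abs_mul, abs_neg, abs_of_nonneg (by positivity : (0:ℝ) ≤ Real.sqrt 2 / 2)]
    nlinarith [sqrt2_ge_one, abs_nonneg (u.re + u.im)]
  have hpm : 3 / 2 ≤ |Real.pi * m| := by
    rw [abs_mul, abs_of_nonneg Real.pi_pos.le]
    nlinarith [Real.pi_gt_three, abs_nonneg m]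
  have hA := abs_exp_pi_I_mul (dd * u)
  have hB := abs_exp_neg_pi_I_mul (dd * u)
  rw [Dfun]
  rcases le_or_gt 0 m with hs | hs
  · have h5 : 3 / 2 ≤ Real.pi * m := by rwa [abs_of_nonneg (by positivity)] at hpm
    have h6 : Real.exp (-(Real.pi * m)) ≤ 1 := by
      rw [← Real.exp_zero]; exact Real.exp_le_exp.mpr (by linarith)
    have h7 : Real.pi * m + 1 ≤ Real.exp (Real.pi * m) := Real.add_one_le_exp _
    calc (1 : ℝ) ≤ Real.exp (Real.pi * m) - Real.exp (-(Real.pi * m)) := by linarith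
    _ = ‖Complex.exp (-(Real.pi * Complex.I) * (dd * u))‖ -
        ‖Complex.exp (Real.pi * Complex.I * (dd * u))‖ := by
        rw [hA, hB]
    _ ≤ ‖Complex.exp (-(Real.pi * Complex.I) * (dd * u)) -
        Complex.exp (Real.pi * Complex.I * (dd * u))‖ := norm_sub_norm_le _ _
    _ = ‖Complex.exp (Real.pi * Complex.I * (dd * u)) -
        Complex.exp (-(Real.pi * Complex.I) * (dd * u))‖ := by
        rw [norm_sub_rev]
  · have h5 : 3 / 2 ≤ -(Real.pi * m) := by
      rw [abs_of_neg (by nlinarith [Real.pi_pos] : Real.pi * m < 0)] at hpm; linarith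
    have h6 : Real.exp (Real.pi * m) ≤ 1 := by
      rw [← Real.exp_zero]; exact Real.exp_le_exp.mpr (by linarith)
    have h7 : -(Real.pi * m) + 1 ≤ Real.exp (-(Real.pi * m)) := Real.add_one_le_exp _
    calc (1 : ℝ) ≤ Real.exp (-(Real.pi * m)) - Real.exp (Real.pi * m) := by linarith
    _ = ‖Complex.exp (Real.pi * Complex.I * (dd * u))‖ -
        ‖Complex.exp (-(Real.pi * Complex.I) * (dd * u))‖ := by
        rw [hA, hB]
    _ ≤ ‖Complex.exp (Real.pi * Complex.I * (dd * u)) -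
        Complex.exp (-(Real.pi * Complex.I) * (dd * u))‖ := norm_sub_norm_le _ _
    _ = _ := rfl

lemma denom_lower {b₁ b₂ : ℝ} (hb₁ : 0 < b₁) (hb : b₁ ≤ b₂) (hb₂ : Real.sqrt 2 * b₂ < 1) :
    ∃ δ : ℝ, 0 < δ ∧ ∀ u : ℂ, b₁ ≤ u.im → u.im ≤ b₂ → δ ≤ Dfun u := by
  set R := b₂ + 1 with hR
  set K : Set ℂ := (fun p : ℝ × ℝ => (p.1 : ℂ) + p.2 * Complex.I) ''
    (Set.Icc (-R) R ×ˢ Set.Icc b₁ b₂) with hK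
  have hb₂' : 0 < b₂ := lt_of_lt_of_le hb₁ hb
  have hKc : IsCompact K := by
    apply (isCompact_Icc.prod isCompact_Icc).image
    continuity
  have hKne : K.Nonempty := by
    apply Set.Nonempty.image
    exact (Set.nonempty_Icc.mpr (by linarith)).prod (Set.nonempty_Icc.mpr hb)
  have hcont : ContinuousOn Dfun K := by
    apply Continuous.continuousOn
    apply continuous_norm.comp
    apply Continuous.sub
    · exact Complex.continuous_exp.comp (continuous_const.mul (continuous_const.mul continuous_id))
    · exact Complex.continuous_exp.comp (continuous_const.mul (continuous_const.mul continuous_id))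
  obtain ⟨u₀, hu₀, hmin'⟩ := hKc.exists_isMinOn hKne hcont
  have hmin : ∀ u ∈ K, Dfun u₀ ≤ Dfun u := fun u hu => hmin' hu
  have hmemK : ∀ u ∈ K, b₁ ≤ u.im ∧ u.im ≤ b₂ := by
    rintro u ⟨⟨p1, p2⟩, ⟨_, hp2⟩, rfl⟩
    simpa using hp2
  have hδ₀ : 0 < Dfun u₀ := by
    obtain ⟨h1, h2⟩ := hmemK u₀ hu₀
    have hy0 : 0 < u₀.im := lt_of_lt_of_le hb₁ h1
    have hy1 : Real.sqrt 2 * u₀.im < 1 := by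
      calc Real.sqrt 2 * u₀.im ≤ Real.sqrt 2 * b₂ := by
            apply mul_le_mul_of_nonneg_left h2 (Real.sqrt_nonneg 2)
      _ < 1 := hb₂
    exact (norm_pos_iff.mpr (denom_ne hy0 hy1))
  refine ⟨min (Dfun u₀) 1, lt_min hδ₀ one_pos, fun u h1 h2 => ?_⟩
  rcases le_or_gt |u.re| R with hle | hgt
  · have huK : u ∈ K := by
      refine ⟨(u.re, u.im), ⟨?_, h1, h2⟩, Complex.re_add_im u⟩
      exact abs_le.mp hle
    exact (min_le_left _ _).trans (hmin u huK)
  · exact (min_le_right _ _).trans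
      (denom_tail (lt_of_lt_of_le hb₁ h1) h2 hgt.le)

lemma g_bound (z : ℂ) (hz : z.re < 1) {b₁ b₂ : ℝ} (hb₁ : 0 < b₁) (hb : b₁ ≤ b₂)
    (hb₂ : Real.sqrt 2 * b₂ < 1) :
    ∃ M : ℝ, 0 ≤ M ∧ ∀ u : ℂ, b₁ ≤ u.im → u.im ≤ b₂ →
      ‖fr z (dd * u) * dd‖ ≤ M * Real.exp (-Real.pi * u.re ^ 2) := by
  obtain ⟨δ, hδ, hδle⟩ := denom_lower hb₁ hb hb₂
  set C : ℝ := b₁ ^ (z.re - 1) * Real.exp (Real.pi * |z.im|) * Real.exp (Real.pi * b₂ ^ 2)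
    with hC
  have hC0 : 0 ≤ C := by positivity
  refine ⟨C / δ, by positivity, fun u h1 h2 => ?_⟩
  have hDpos : 0 < Dfun u := lt_of_lt_of_le hδ (hδle u h1 h2)
  have : ‖fr z (dd * u) * dd‖ = ‖(dd * u) ^ (z - 1) *
      Complex.exp (Real.pi * Complex.I * (dd * u) ^ 2)‖ / Dfun u := by
    rw [norm_mul, abs_dd, mul_one, fr, norm_div, Dfun]
  rw [this]
  calc ‖(dd * u) ^ (z - 1) * Complex.exp (Real.pi * Complex.I * (dd * u) ^ 2)‖ /
        Dfun u ≤ (C * Real.exp (-Real.pi * u.re ^ 2)) / δ := by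
        apply div_le_div₀ (by positivity) ?_ hδ (hδle u h1 h2)
        exact num_bound z hz hb₁ h1 h2
  _ = C / δ * Real.exp (-Real.pi * u.re ^ 2) := by ring

lemma cont_g (z : ℂ) {u : ℂ} (hy0 : 0 < u.im) (hy1 : Real.sqrt 2 * u.im < 1) :
    ContinuousAt (fun v => fr z (dd * v) * dd) u :=
  (diff_g z hy0 hy1).continuousAt

lemma integrable_line (z : ℂ) (hz : z.re < 1) {c : ℝ} (hc0 : 0 < c)
    (hc1 : Real.sqrt 2 * c < 1) :
    Integrable (fun t : ℝ => fr z (dd * (t + c * Complex.I)) * dd) := by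
  obtain ⟨M, hM0, hM⟩ := g_bound z hz hc0 le_rfl hc1
  have him : ∀ t : ℝ, ((t : ℂ) + c * Complex.I).im = c := by intro t; simp
  have hre : ∀ t : ℝ, ((t : ℂ) + c * Complex.I).re = t := by intro t; simp
  have hcont : Continuous (fun t : ℝ => fr z (dd * (t + c * Complex.I)) * dd) := by
    rw [continuous_iff_continuousAt]
    intro t
    have h1 : ContinuousAt (fun v => fr z (dd * v) * dd) ((t : ℂ) + c * Complex.I) := by
      apply cont_g z (u := (t : ℂ) + c * Complex.I) <;> rw [him t] <;> assumption
    exact ContinuousAt.comp (g := fun v => fr z (dd * v) * dd)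
      (f := fun s : ℝ => (s : ℂ) + c * Complex.I) h1 (by fun_prop)
  apply Integrable.mono' (g := fun t : ℝ => M * Real.exp (-Real.pi * t ^ 2))
  · exact (Integrable.const_mul (integrable_exp_neg_mul_sq Real.pi_pos) M).congr
      (Filter.Eventually.of_forall fun t => by ring_nf)
  · exact hcont.aestronglyMeasurable
  · refine Filter.Eventually.of_forall fun t => ?_
    have := hM ((t : ℂ) + c * Complex.I) (by rw [him t]) (by rw [him t])
    rwa [hre t] at this

open Filter in
lemma key (z : ℂ) (hz : z.re < 1) {b₁ b₂ : ℝ} (hb₁ : 0 < b₁) (hb : b₁ ≤ b₂)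
    (hb₂ : Real.sqrt 2 * b₂ < 1) :
    (∫ t : ℝ, gg z (t + b₁ * Complex.I)) = (∫ t : ℝ, gg z (t + b₂ * Complex.I)) := by
  obtain ⟨M, hM0, hM⟩ := g_bound z hz hb₁ hb hb₂
  have hb₂0 : 0 < b₂ := lt_of_lt_of_le hb₁ hb
  have hb₁1 : Real.sqrt 2 * b₁ < 1 :=
    lt_of_le_of_lt (by nlinarith [Real.sqrt_nonneg 2]) hb₂
  set J₁ : ℝ → ℂ := fun T => ∫ x in (-T)..T, gg z (x + b₁ * Complex.I) with hJ₁
  set J₂ : ℝ → ℂ := fun T => ∫ x in (-T)..T, gg z (x + b₂ * Complex.I) with hJ₂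
  set VL : ℝ → ℂ := fun T => ∫ y in b₁..b₂, gg z ((-T : ℝ) + y * Complex.I) with hVL
  set VR : ℝ → ℂ := fun T => ∫ y in b₁..b₂, gg z ((T : ℝ) + y * Complex.I) with hVR
  have hrect : ∀ T : ℝ, J₁ T - J₂ T = Complex.I • VL T - Complex.I • VR T := by
    intro T
    set zc : ℂ := (-T : ℝ) + (b₁ : ℝ) * Complex.I with hzc
    set wc : ℂ := (T : ℝ) + (b₂ : ℝ) * Complex.I with hwc
    have hre1 : zc.re = -T := by simp [hzc]
    have hre2 : wc.re = T := by simp [hwc]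
    have him1 : zc.im = b₁ := by simp [hzc]
    have him2 : wc.im = b₂ := by simp [hwc]
    have hdiff : DifferentiableOn ℂ (gg z)
        (Set.uIcc zc.re wc.re ×ℂ Set.uIcc zc.im wc.im) := by
      intro u hu
      rw [Complex.mem_reProdIm, him1, him2, Set.uIcc_of_le hb] at hu
      have h1 : b₁ ≤ u.im := hu.2.1
      have h2 : u.im ≤ b₂ := hu.2.2
      have : DifferentiableAt ℂ (fun v => fr z (dd * v) * dd) u :=
        diff_g z (lt_of_lt_of_le hb₁ h1)
          (lt_of_le_of_lt (by nlinarith [Real.sqrt_nonneg 2]) hb₂)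
      exact this.differentiableWithinAt
    have H := Complex.integral_boundary_rect_eq_zero_of_differentiableOn (gg z) zc wc hdiff
    rw [hre1, hre2, him1, him2] at H
    rw [hJ₁, hJ₂, hVL, hVR]
    simp only [smul_eq_mul] at H ⊢
    linear_combination H
  have hVbound : ∀ (T : ℝ) (s : ℝ), (fun y : ℝ => gg z ((s : ℝ) + y * Complex.I)) = _ := fun _ _ => rfl
  have hVnorm : ∀ (T s : ℝ), s ^ 2 = T ^ 2 →
      ‖∫ y in b₁..b₂, gg z ((s : ℝ) + y * Complex.I)‖ ≤
        M * Real.exp (-Real.pi * T ^ 2) * |b₂ - b₁| := by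
    intro T s hs
    apply intervalIntegral.norm_integral_le_of_norm_le_const
    intro y hy
    rw [Set.uIoc_of_le hb] at hy
    have h1 : b₁ ≤ ((s : ℂ) + y * Complex.I).im := by simp; exact hy.1.le
    have h2 : ((s : ℂ) + y * Complex.I).im ≤ b₂ := by simp; exact hy.2
    have := hM _ h1 h2
    rw [show ((s : ℂ) + y * Complex.I).re = s by simp, hs] at this
    exact this
  have hnorm : ∀ T : ℝ, ‖J₁ T - J₂ T‖ ≤ 2 * (M * Real.exp (-Real.pi * T ^ 2) * |b₂ - b₁|) := by
    intro T
    rw [hrect T]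
    calc ‖Complex.I • VL T - Complex.I • VR T‖ ≤ ‖Complex.I • VL T‖ + ‖Complex.I • VR T‖ :=
          norm_sub_le _ _
    _ = ‖VL T‖ + ‖VR T‖ := by
        rw [norm_smul, norm_smul, Complex.norm_I, one_mul, one_mul]
    _ ≤ M * Real.exp (-Real.pi * T ^ 2) * |b₂ - b₁| +
        M * Real.exp (-Real.pi * T ^ 2) * |b₂ - b₁| := by
        apply add_le_add
        · exact hVnorm T (-T) (by ring)
        · exact hVnorm T T rfl
    _ = _ := by ring
  have hexp0 : Tendsto (fun T : ℝ => 2 * (M * Real.exp (-Real.pi * T ^ 2) * |b₂ - b₁|))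
      atTop (nhds 0) := by
    have h1 : Tendsto (fun T : ℝ => Real.pi * T ^ 2) atTop atTop :=
      (tendsto_pow_atTop two_ne_zero).const_mul_atTop Real.pi_pos
    have h2 : Tendsto (fun T : ℝ => -(Real.pi * T ^ 2)) atTop atBot :=
      tendsto_neg_atTop_atBot.comp h1
    have h3 : Tendsto (fun T : ℝ => Real.exp (-Real.pi * T ^ 2)) atTop (nhds 0) := by
      simpa [Function.comp_def, neg_mul] using Real.tendsto_exp_atBot.comp h2
    have := (h3.const_mul M).mul_const |b₂ - b₁|
    simpa using this.const_mul 2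
  have hsub0 : Tendsto (fun T => J₁ T - J₂ T) atTop (nhds 0) := by
    rw [tendsto_zero_iff_norm_tendsto_zero]
    exact tendsto_of_tendsto_of_tendsto_of_le_of_le tendsto_const_nhds hexp0
      (fun T => norm_nonneg _) hnorm
  have h₁ : Tendsto J₁ atTop (nhds (∫ t : ℝ, gg z (t + b₁ * Complex.I))) :=
    intervalIntegral_tendsto_integral (integrable_line z hz hb₁ hb₁1)
      tendsto_neg_atTop_atBot tendsto_id
  have h₂ : Tendsto J₂ atTop (nhds (∫ t : ℝ, gg z (t + b₂ * Complex.I))) :=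
    intervalIntegral_tendsto_integral (integrable_line z hz hb₂0 hb₂)
      tendsto_neg_atTop_atBot tendsto_id
  have := tendsto_nhds_unique (h₁.sub h₂) hsub0
  exact sub_eq_zero.mp this

lemma sqrt2_sq' : (Real.sqrt 2 : ℝ) * Real.sqrt 2 = 2 := Real.mul_self_sqrt (by norm_num)

lemma dd_mul_I_sub_one : dd * (Complex.I - 1) = ((Real.sqrt 2 : ℝ) : ℂ) := by
  rw [dd_eq]
  have h2 : ((Real.sqrt 2 : ℝ) : ℂ) * ((Real.sqrt 2 : ℝ) : ℂ) = 2 := by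
    norm_cast; exact sqrt2_sq'
  push_cast
  linear_combination (-(((Real.sqrt 2 : ℝ) : ℂ) / 2)) * Complex.I_sq

lemma reduce (z : ℂ) (a c : ℝ) (hc : c * Real.sqrt 2 = a) :
    (∫ t : ℝ, fr z (a + t * dd) * dd) = ∫ t : ℝ, gg z (t + c * Complex.I) := by
  have hcaC : ((c : ℝ) : ℂ) * ((Real.sqrt 2 : ℝ) : ℂ) = ((a : ℝ) : ℂ) := by
    norm_cast
  have hpt : ∀ t : ℝ, (a : ℂ) + t * dd = dd * (((t - c : ℝ) : ℂ) + (c : ℝ) * Complex.I) := by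
    intro t
    push_cast
    linear_combination (-(c : ℂ)) * dd_mul_I_sub_one - hcaC
  have h1 : (∫ t : ℝ, fr z (a + t * dd) * dd) =
      ∫ t : ℝ, gg z (((t - c : ℝ) : ℂ) + (c : ℝ) * Complex.I) := by
    congr 1
    funext t
    rw [gg, ← hpt t]
  rw [h1]
  exact integral_sub_right_eq_self (fun s : ℝ => gg z ((s : ℂ) + (c : ℝ) * Complex.I)) c

/-- The integral of `f_r` along the line of slope `+1` through `(a,0)`
(direction `exp(-3iπ/4)`) does not depend on the crossing point `a ∈ (0,1)`. -/
theorem fr_line_integral_independent (z : ℂ) (h0 : 0 < z.re) (h1 : z.re < 1)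
    (a a' : ℝ) (ha0 : 0 < a) (ha1 : a < 1) (ha'0 : 0 < a') (ha'1 : a' < 1) :
    (∫ t : ℝ, fr z (a + t * Complex.exp (-(3 * Real.pi * Complex.I) / 4)) *
        Complex.exp (-(3 * Real.pi * Complex.I) / 4)) =
    (∫ t : ℝ, fr z (a' + t * Complex.exp (-(3 * Real.pi * Complex.I) / 4)) *
        Complex.exp (-(3 * Real.pi * Complex.I) / 4)) := by
  have hdd : Complex.exp (-(3 * (Real.pi : ℂ) * Complex.I) / 4) = dd := rfl
  rw [hdd]
  set c := a * (Real.sqrt 2 / 2) with hcdef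
  set c' := a' * (Real.sqrt 2 / 2) with hc'def
  have hs2 := sqrt2_sq'
  have hs2pos : 0 < Real.sqrt 2 := Real.sqrt_pos.mpr (by norm_num)
  have hc : c * Real.sqrt 2 = a := by rw [hcdef]; linear_combination (a / 2) * hs2
  have hc' : c' * Real.sqrt 2 = a' := by rw [hc'def]; linear_combination (a' / 2) * hs2
  have hc0 : 0 < c := by rw [hcdef]; positivity
  have hc'0 : 0 < c' := by rw [hc'def]; positivity
  have hc1 : Real.sqrt 2 * c < 1 := by rw [mul_comm, hc]; exact ha1
  have hc'1 : Real.sqrt 2 * c' < 1 := by rw [mul_comm, hc']; exact ha'1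
  rw [reduce z a c hc, reduce z a' c' hc']
  rcases le_total c c' with h | h
  · exact key z h1 hc0 h hc'1
  · exact (key z h1 hc'0 h hc1).symm
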